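/- Let A be a commutative ring and let φ₁, φ₂ : A → ℂ[[s]] be ring homomorphisms into the ring of formal power series over ℂ such that constantCoeff(φ₁(a)) = constantCoeff(φ₂(a)) for every a ∈ A. Let t ∈ A be such that for i = 1, 2 one has φᵢ(t) ≠ 0 and constantCoeff(φᵢ(t)) = 0. Let ι be an index set, σ : ι → A, and μ : ι → ℕ with μ_a ≥ 1 for all a, and suppose that for each a ∈ ι and i = 1, 2 there exists h_{a,i} ∈ ℂ[[s]] with φᵢ(σ_a) = φᵢ(t)^{μ_a} · h_{a,i}, and that constantCoeff(h_{a,1}) = constantCoeff(h_{a,2}). Then for every integer ν ≥ 1 and every element τ of the ν-th power of the ideal of A generated by the set {σ_a : a ∈ ι}, there exist g₁, g₂ ∈ ℂ[[s]] with φᵢ(τ) = φᵢ(t)^ν · gᵢ for i = 1, 2 and constantCoeff(g₁) = constantCoeff(g₂). -/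

import Mathlib

open PowerSeries

/-- **Algebraic core of Lemma 4 of the paper.**
Let `φ₁, φ₂ : A → ℂ[[s]]` be ring homomorphisms agreeing at the constant coefficient,
`t ∈ A` with `φᵢ t ≠ 0` of positive order, and `σ : ι → A`, `μ : ι → ℕ` with `μ a ≥ 1`
such that `φᵢ (σ a)` is divisible by `(φᵢ t) ^ (μ a)` with quotients having matching
constant coefficients.  Then for every `ν ≥ 1` and every `τ` in the `ν`-th power of the
ideal generated by the `σ a`, the images `φᵢ τ` are divisible by `(φᵢ t) ^ ν` with
quotients `g₁, g₂` having the same constant coefficient. -/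
theorem arcs_same_limit_on_ideal_powers
    (A : Type*) [CommRing A]
    (φ₁ φ₂ : A →+* PowerSeries ℂ)
    (hφ : ∀ a : A, PowerSeries.constantCoeff (R := ℂ) (φ₁ a) = PowerSeries.constantCoeff (R := ℂ) (φ₂ a))
    (t : A)
    (ht₁ : φ₁ t ≠ 0) (ht₂ : φ₂ t ≠ 0)
    (ht₁0 : PowerSeries.constantCoeff (R := ℂ) (φ₁ t) = 0)
    (ht₂0 : PowerSeries.constantCoeff (R := ℂ) (φ₂ t) = 0)
    (ι : Type*) (σ : ι → A) (μ : ι → ℕ) (hμ : ∀ a : ι, 1 ≤ μ a)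
    (hσ : ∀ a : ι, ∃ h₁ h₂ : PowerSeries ℂ,
      φ₁ (σ a) = (φ₁ t) ^ (μ a) * h₁ ∧
      φ₂ (σ a) = (φ₂ t) ^ (μ a) * h₂ ∧
      PowerSeries.constantCoeff (R := ℂ) h₁ = PowerSeries.constantCoeff (R := ℂ) h₂)
    (ν : ℕ) (hν : 1 ≤ ν)
    (τ : A) (hτ : τ ∈ (Ideal.span (Set.range σ)) ^ ν) :
    ∃ g₁ g₂ : PowerSeries ℂ,
      φ₁ τ = (φ₁ t) ^ ν * g₁ ∧
      φ₂ τ = (φ₂ t) ^ ν * g₂ ∧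
      PowerSeries.constantCoeff (R := ℂ) g₁ = PowerSeries.constantCoeff (R := ℂ) g₂ := by
  -- First: every element of the span factors through one power of t with matching cc.
  have key : ∀ r ∈ Ideal.span (Set.range σ), ∃ g₁ g₂ : PowerSeries ℂ,
      φ₁ r = φ₁ t * g₁ ∧ φ₂ r = φ₂ t * g₂ ∧
      PowerSeries.constantCoeff (R := ℂ) g₁ = PowerSeries.constantCoeff (R := ℂ) g₂ := by
    intro r hr
    refine Submodule.span_induction ?_ ?_ ?_ ?_ hr
    · rintro x ⟨a, rfl⟩
      obtain ⟨h₁, h₂, e₁, e₂, hcc⟩ := hσ a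
      refine ⟨(φ₁ t) ^ (μ a - 1) * h₁, (φ₂ t) ^ (μ a - 1) * h₂, ?_, ?_, ?_⟩
      · rw [e₁, ← mul_assoc, ← pow_succ', Nat.sub_add_cancel (hμ a)]
      · rw [e₂, ← mul_assoc, ← pow_succ', Nat.sub_add_cancel (hμ a)]
      · rcases Nat.lt_or_ge 1 (μ a) with h | h
        · have : μ a - 1 ≠ 0 := by omega
          simp [map_mul, map_pow, ht₁0, ht₂0, zero_pow this]
        · have : μ a - 1 = 0 := by omega
          simp [this, hcc]
    · exact ⟨0, 0, by simp, by simp, rfl⟩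
    · rintro x y - - ⟨g₁, g₂, e₁, e₂, hcc⟩ ⟨k₁, k₂, f₁, f₂, kcc⟩
      exact ⟨g₁ + k₁, g₂ + k₂, by rw [map_add, e₁, f₁, mul_add],
        by rw [map_add, e₂, f₂, mul_add], by simp [hcc, kcc]⟩
    · rintro c x - ⟨g₁, g₂, e₁, e₂, hcc⟩
      refine ⟨φ₁ c * g₁, φ₂ c * g₂, ?_, ?_, ?_⟩
      · rw [smul_eq_mul, map_mul, e₁]; ring
      · rw [smul_eq_mul, map_mul, e₂]; ring
      · simp [hφ c, hcc]
  clear hν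
  refine Submodule.pow_induction_on_left' (M := Ideal.span (Set.range σ))
    (C := fun n x _ => ∃ g₁ g₂ : PowerSeries ℂ,
      φ₁ x = (φ₁ t) ^ n * g₁ ∧ φ₂ x = (φ₂ t) ^ n * g₂ ∧
      PowerSeries.constantCoeff (R := ℂ) g₁ = PowerSeries.constantCoeff (R := ℂ) g₂) ?_ ?_ ?_ hτ
  · intro r
    exact ⟨φ₁ r, φ₂ r, by simp, by simp, hφ r⟩
  · rintro x y i - - ⟨g₁, g₂, e₁, e₂, hcc⟩ ⟨k₁, k₂, f₁, f₂, kcc⟩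
    exact ⟨g₁ + k₁, g₂ + k₂, by rw [map_add, e₁, f₁, mul_add],
      by rw [map_add, e₂, f₂, mul_add], by simp [hcc, kcc]⟩
  · rintro m hm i x - ⟨g₁, g₂, e₁, e₂, hcc⟩
    obtain ⟨k₁, k₂, f₁, f₂, kcc⟩ := key m hm
    refine ⟨k₁ * g₁, k₂ * g₂, ?_, ?_, by simp [hcc, kcc]⟩
    · rw [map_mul, e₁, f₁, pow_succ]; ring
    · rw [map_mul, e₂, f₂, pow_succ]; ring
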